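/- arXiv:1611.01194 — 4 statements merged into one kernel-verified Lean document; each statement's English description precedes it below -/
import Mathlib

section
/- Let (X, 𝒜) be a measurable space, let S be a Markov transition kernel on X, and let μ* be a probability measure on X invariant for S (i.e., ∫_X S(x,A) μ*(dx) = μ*(A) for all A ∈ 𝒜). Suppose there exist θ ∈ (0,1] and a probability measure ν on X such that S(x,A) ≥ θ·ν(A) for every x ∈ X and every A ∈ 𝒜 (a Doeblin minorization). Then for every x ∈ X, every n ≥ 1, and every A ∈ 𝒜, |Sⁿ(x,A) − μ*(A)| ≤ (1−θ)ⁿ. -/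
open MeasureTheory ProbabilityTheory
open scoped ENNReal NNReal

/-- The `n`-fold iterate of a Markov transition kernel, with `S⁰(x,·) = δ_x`. -/
noncomputable def kernelIter {X : Type*} [MeasurableSpace X] (S : Kernel X X) :
    ℕ → Kernel X X
  | 0 => Kernel.id
  | n + 1 => S ∘ₖ kernelIter S n

section Aux

variable {X : Type*} [MeasurableSpace X] (S : Kernel X X) [IsMarkovKernel S]

instance kernelIter.instIsMarkovKernel (n : ℕ) : IsMarkovKernel (kernelIter S n) := by
  induction n with
  | zero => rw [kernelIter]; infer_instance
  | succ n ih => rw [kernelIter]; infer_instance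

lemma kernelIter_succ_right (n : ℕ) : kernelIter S (n + 1) = kernelIter S n ∘ₖ S := by
  induction n with
  | zero => show S ∘ₖ Kernel.id = Kernel.id ∘ₖ S; rw [Kernel.comp_id, Kernel.id_comp]
  | succ n ih =>
    calc kernelIter S (n + 2) = S ∘ₖ (kernelIter S n ∘ₖ S) := by
          rw [show kernelIter S (n + 2) = S ∘ₖ kernelIter S (n + 1) from rfl, ih]
      _ = (S ∘ₖ kernelIter S n) ∘ₖ S := (Kernel.comp_assoc S (kernelIter S n) S).symm
      _ = kernelIter S (n + 1) ∘ₖ S := rfl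

lemma kernelIter_contraction
    (θ : ℝ) (hθ : θ ∈ Set.Ioc (0:ℝ) 1)
    (ν : Measure X) [IsProbabilityMeasure ν]
    (hmin : ∀ x : X, ∀ A : Set X, MeasurableSet A → ENNReal.ofReal θ * ν A ≤ S x A)
    (n : ℕ) :
    ∀ A : Set X, MeasurableSet A → ∀ x y : X,
      |(kernelIter S n x A).toReal - (kernelIter S n y A).toReal| ≤ (1 - θ) ^ n := by
  induction n with
  | zero =>
    intro A hA x y
    rw [pow_zero, abs_sub_le_iff]
    constructor <;>
    · refine sub_le_iff_le_add.mpr (le_trans ?_ (le_add_of_nonneg_right ENNReal.toReal_nonneg))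
      exact ENNReal.toReal_le_of_le_ofReal zero_le_one (by simpa using prob_le_one)
  | succ n ih =>
    intro A hA x y
    set c : ℝ≥0∞ := ENNReal.ofReal θ with hc
    have hc1 : c ≤ 1 := ENNReal.ofReal_le_one.mpr hθ.2
    have hcθ : c.toReal = θ := ENNReal.toReal_ofReal hθ.1.le
    have hle : ∀ z, c • ν ≤ S z := by
      intro z
      refine Measure.le_iff.mpr fun B hB => ?_
      simpa [smul_eq_mul] using hmin z B hB
    haveI : IsFiniteMeasure (c • ν) := by
      refine ⟨?_⟩
      simp only [Measure.smul_apply, smul_eq_mul, measure_univ, mul_one]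
      exact lt_of_le_of_lt hc1 ENNReal.one_lt_top
    set R : X → Measure X := fun z => S z - c • ν with hR
    have hdecomp : ∀ z, S z = R z + c • ν := fun z =>
      (Measure.sub_add_cancel_of_le (hle z)).symm
    have hRuniv : ∀ z, R z Set.univ = 1 - c := by
      intro z
      rw [hR]
      simp only
      rw [Measure.sub_apply MeasurableSet.univ (hle z)]
      simp [measure_univ]
    haveI hRfin : ∀ z, IsFiniteMeasure (R z) := by
      intro z
      exact ⟨by rw [hRuniv]; exact lt_of_le_of_lt tsub_le_self ENNReal.one_lt_top⟩
    have hRtoReal : ∀ z, (R z Set.univ).toReal = 1 - θ := by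
      intro z
      rw [hRuniv, ENNReal.toReal_sub_of_le hc1 ENNReal.one_ne_top, ENNReal.toReal_one, hcθ]
    -- the function g
    set g : X → ℝ := fun z => (kernelIter S n z A).toReal with hgdef
    have hg_meas : Measurable g := (Kernel.measurable_coe _ hA).ennreal_toReal
    have hg0 : ∀ z, 0 ≤ g z := fun z => ENNReal.toReal_nonneg
    have hg1 : ∀ z, g z ≤ 1 := fun z =>
      ENNReal.toReal_le_of_le_ofReal zero_le_one (by simpa using prob_le_one)
    have hgint : ∀ (μ : Measure X) [IsFiniteMeasure μ], Integrable g μ := by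
      intro μ _
      refine Integrable.mono' (integrable_const 1) hg_meas.aestronglyMeasurable ?_
      exact ae_of_all _ fun z => by
        rw [Real.norm_eq_abs, abs_of_nonneg (hg0 z)]; exact hg1 z
    -- expression of the (n+1)-iterate
    have hlt : ∀ z, ∀ᵐ w ∂(R z), kernelIter S n w A < ⊤ :=
      fun z => ae_of_all _ fun w => lt_of_le_of_lt prob_le_one ENNReal.one_lt_top
    have happ : ∀ z, (kernelIter S (n+1) z A).toReal
        = ∫ w, g w ∂(R z) + θ * (∫⁻ w, kernelIter S n w A ∂ν).toReal := by
      intro z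
      rw [kernelIter_succ_right, Kernel.comp_apply' _ _ _ hA]
      conv_lhs => rw [hdecomp z]
      rw [lintegral_add_measure, lintegral_smul_measure]
      have hb1 : (∫⁻ w, kernelIter S n w A ∂(R z)) ≤ R z Set.univ := by
        calc (∫⁻ w, kernelIter S n w A ∂(R z)) ≤ ∫⁻ _, 1 ∂(R z) :=
              lintegral_mono fun w => prob_le_one
          _ = R z Set.univ := by simp
      have hfin1 : (∫⁻ w, kernelIter S n w A ∂(R z)) ≠ ⊤ := by
        refine ne_of_lt (lt_of_le_of_lt hb1 ?_)
        rw [hRuniv]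
        exact lt_of_le_of_lt tsub_le_self ENNReal.one_lt_top
      have hb2 : (∫⁻ w, kernelIter S n w A ∂ν) ≤ 1 := by
        calc (∫⁻ w, kernelIter S n w A ∂ν) ≤ ∫⁻ _, 1 ∂ν :=
              lintegral_mono fun w => prob_le_one
          _ = 1 := by simp
      have hfin2 : c * (∫⁻ w, kernelIter S n w A ∂ν) ≠ ⊤ := by
        refine ne_of_lt (lt_of_le_of_lt (mul_le_mul' hc1 hb2) ?_)
        rw [mul_one]
        exact ENNReal.one_lt_top
      rw [smul_eq_mul, ENNReal.toReal_add hfin1 hfin2, ENNReal.toReal_mul, hcθ,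
        ← integral_toReal ((Kernel.measurable_coe _ hA).aemeasurable) (hlt z)]
    -- reduce to a bound on integrals against R x, R y
    have hgoal : (kernelIter S (n+1) x A).toReal - (kernelIter S (n+1) y A).toReal
        = ∫ w, g w ∂(R x) - ∫ w, g w ∂(R y) := by
      rw [happ x, happ y]; ring
    rw [hgoal]
    rcases eq_or_lt_of_le hθ.2 with hθ1 | hθ1
    · -- θ = 1 : both remainders are the zero measure
      subst hθ1
      have hRzero : ∀ z, R z = 0 := by
        intro z
        refine Measure.measure_univ_eq_zero.mp ?_
        rw [hRuniv]
        simp [hc]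
      rw [hRzero x, hRzero y]
      simp
    · -- θ < 1
      have h1θ : (0:ℝ) < 1 - θ := by linarith
      set a : ℝ := ∫ w, g w ∂(R x) with ha
      set b : ℝ := ∫ w, g w ∂(R y) with hb
      have hinner : ∀ w, |a - (1 - θ) * g w| ≤ (1 - θ) ^ n * (1 - θ) := by
        intro w
        have heq : a - (1 - θ) * g w = ∫ z, (g z - g w) ∂(R x) := by
          rw [integral_sub (hgint _) (integrable_const _), integral_const, measureReal_def, hRtoReal,
            smul_eq_mul, ha]
        rw [heq, ← Real.norm_eq_abs]
        refine le_trans (norm_integral_le_integral_norm _) ?_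
        have : ∫ z, ‖g z - g w‖ ∂(R x) ≤ ∫ _, (1 - θ)^n ∂(R x) := by
          refine integral_mono ((hgint _).sub (integrable_const _)).norm (integrable_const _)
            fun z => ?_
          rw [Real.norm_eq_abs]
          exact ih A hA z w
        refine le_trans this ?_
        rw [integral_const, measureReal_def, hRtoReal, smul_eq_mul, mul_comm]
      have houter : (1 - θ) * (a - b) = ∫ w, (a - (1 - θ) * g w) ∂(R y) := by
        rw [integral_sub (integrable_const _) ((hgint _).const_mul _), integral_const,
          integral_const_mul, measureReal_def, hRtoReal, smul_eq_mul, ← hb]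
        ring
      have hbound : |(1 - θ) * (a - b)| ≤ (1 - θ) ^ n * (1 - θ) * (1 - θ) := by
        rw [houter, ← Real.norm_eq_abs]
        refine le_trans (norm_integral_le_integral_norm _) ?_
        have : ∫ w, ‖a - (1 - θ) * g w‖ ∂(R y) ≤ ∫ _, (1 - θ)^n * (1 - θ) ∂(R y) := by
          refine integral_mono ((integrable_const _).sub ((hgint _).const_mul _)).norm
            (integrable_const _) fun w => ?_
          rw [Real.norm_eq_abs]
          exact hinner w
        refine le_trans this ?_
        rw [integral_const, measureReal_def, hRtoReal, smul_eq_mul, mul_comm]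
      rw [abs_mul, abs_of_pos h1θ] at hbound
      have : |a - b| ≤ (1 - θ) ^ n * (1 - θ) := by
        rw [mul_comm ((1-θ)^n * (1-θ)) (1-θ)] at hbound
        exact le_of_mul_le_mul_left hbound h1θ
      calc |a - b| ≤ (1 - θ) ^ n * (1 - θ) := this
        _ = (1 - θ) ^ (n + 1) := (pow_succ _ _).symm

omit [IsMarkovKernel S] in
lemma kernelIter_invariant
    (μstar : Measure X) [IsProbabilityMeasure μstar]
    (hinv : ∀ A : Set X, MeasurableSet A → ∫⁻ x, S x A ∂μstar = μstar A) :
    ∀ n : ℕ, ∀ A : Set X, MeasurableSet A →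
      ∫⁻ y, kernelIter S n y A ∂μstar = μstar A := by
  intro n
  induction n with
  | zero =>
    intro A hA
    simp only [kernelIter, Kernel.id_apply]
    rw [lintegral_congr fun y => Measure.dirac_apply' y hA]
    rw [lintegral_indicator hA]
    simp
  | succ n ih =>
    intro A hA
    have hbind : μstar.bind (kernelIter S n) = μstar := by
      ext B hB
      rw [Measure.bind_apply hB (Kernel.measurable _).aemeasurable]
      exact ih B hB
    calc ∫⁻ y, kernelIter S (n+1) y A ∂μstar
        = ∫⁻ y, ∫⁻ z, S z A ∂(kernelIter S n y) ∂μstar := by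
          refine lintegral_congr fun y => ?_
          show (S ∘ₖ kernelIter S n) y A = _
          rw [Kernel.comp_apply' _ _ _ hA]
      _ = ∫⁻ z, S z A ∂(μstar.bind (kernelIter S n)) :=
          (Measure.lintegral_bind (Kernel.measurable _).aemeasurable (Kernel.measurable_coe S hA).aemeasurable).symm
      _ = μstar A := by rw [hbind]; exact hinv A hA

end Aux

/-- Doeblin's theorem: if a Markov kernel `S` on `(X,𝒜)` has invariant probability measure `μ*`
and satisfies the minorization `S(x,A) ≥ θ·ν(A)` for some `θ ∈ (0,1]` and probability
measure `ν`, then `|Sⁿ(x,A) − μ*(A)| ≤ (1−θ)ⁿ` for all `x ∈ X`, `n ≥ 1` and `A ∈ 𝒜`. -/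
theorem doeblin_minorization_convergence
    {X : Type*} [MeasurableSpace X] (S : Kernel X X) [IsMarkovKernel S]
    (μstar : Measure X) [IsProbabilityMeasure μstar]
    (hinv : ∀ A : Set X, MeasurableSet A → ∫⁻ x, S x A ∂μstar = μstar A)
    (θ : ℝ) (hθ : θ ∈ Set.Ioc (0:ℝ) 1)
    (ν : Measure X) [IsProbabilityMeasure ν]
    (hmin : ∀ x : X, ∀ A : Set X, MeasurableSet A → ENNReal.ofReal θ * ν A ≤ S x A) :
    ∀ x : X, ∀ n : ℕ, 1 ≤ n → ∀ A : Set X, MeasurableSet A →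
      |(kernelIter S n x A).toReal - (μstar A).toReal| ≤ (1 - θ) ^ n := by
  intro x n _ A hA
  set g : X → ℝ := fun z => (kernelIter S n z A).toReal with hgdef
  have hg_meas : Measurable g := (Kernel.measurable_coe _ hA).ennreal_toReal
  have hg0 : ∀ z, 0 ≤ g z := fun z => ENNReal.toReal_nonneg
  have hg1 : ∀ z, g z ≤ 1 := fun z =>
    ENNReal.toReal_le_of_le_ofReal zero_le_one (by simpa using prob_le_one)
  have hgint : Integrable g μstar := by
    refine Integrable.mono' (integrable_const 1) hg_meas.aestronglyMeasurable ?_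
    exact ae_of_all _ fun z => by
      rw [Real.norm_eq_abs, abs_of_nonneg (hg0 z)]; exact hg1 z
  have hmu : (μstar A).toReal = ∫ y, g y ∂μstar := by
    rw [← kernelIter_invariant S μstar hinv n A hA,
      ← integral_toReal (Kernel.measurable_coe _ hA).aemeasurable
        (ae_of_all _ fun w => lt_of_le_of_lt prob_le_one ENNReal.one_lt_top)]
  have hx : g x = ∫ _, g x ∂μstar := by rw [integral_const]; simp
  have key := kernelIter_contraction S θ hθ ν hmin n A hA
  have hsub : ∫ y, (g x - g y) ∂μstar = g x - ∫ y, g y ∂μstar := by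
    rw [integral_sub (integrable_const _) hgint, integral_const]
    simp
  calc |g x - (μstar A).toReal| = |∫ y, (g x - g y) ∂μstar| := by
        rw [hmu, hsub]
    _ ≤ ∫ y, |g x - g y| ∂μstar := by
        rw [← Real.norm_eq_abs]
        refine le_trans (norm_integral_le_integral_norm _) (le_of_eq ?_)
        exact integral_congr_ae (ae_of_all _ fun y => Real.norm_eq_abs _)
    _ ≤ ∫ _, (1 - θ)^n ∂μstar := by
        refine integral_mono ((integrable_const _).sub hgint).abs (integrable_const _)
          fun y => key x y
    _ = (1 - θ)^n := by rw [integral_const]; simp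
end

section
/- Let X ⊂ ℝ^d (d ≥ 1) be a compact convex set with nonempty interior and let e ∈ ℝ^d be a unit vector. Then for every Borel set A ⊆ X, ∫_X (ℒ¹({λ ∈ ℝ : x + λe ∈ A}) / ℒ¹({λ ∈ ℝ : x + λe ∈ X})) dℒ_d(x) = ℒ_d(A), where the quotient is interpreted as 0 when the denominator vanishes. In particular, the Lebesgue measure restricted to X is invariant for the hit-and-run transition kernel. -/
open MeasureTheory

lemma prod_slice_lemma {n : ℕ} (S T : Set (ℝ × (Fin n → ℝ))) (hS : MeasurableSet S)
    (hT : MeasurableSet T) (hTS : T ⊆ S) (hSfin : volume S < ⊤) :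
    ∫ p in S, (volume {l : ℝ | (l, p.2) ∈ T}).toReal / (volume {l : ℝ | (l, p.2) ∈ S}).toReal
      = (volume T).toReal := by
  have hvol : (volume : Measure (ℝ × (Fin n → ℝ)))
      = (volume : Measure ℝ).prod (volume : Measure (Fin n → ℝ)) := rfl
  have hSy : ∀ y : Fin n → ℝ, MeasurableSet {l : ℝ | (l, y) ∈ S} := fun y =>
    measurable_prodMk_right hS
  have hTy : ∀ y : Fin n → ℝ, MeasurableSet {l : ℝ | (l, y) ∈ T} := fun y =>
    measurable_prodMk_right hT
  set g : (Fin n → ℝ) → ℝ := fun y =>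
    (volume {l : ℝ | (l, y) ∈ T}).toReal / (volume {l : ℝ | (l, y) ∈ S}).toReal with hg
  have hmT : Measurable fun y : Fin n → ℝ => volume {l : ℝ | (l, y) ∈ T} :=
    measurable_measure_prodMk_right hT
  have hmS : Measurable fun y : Fin n → ℝ => volume {l : ℝ | (l, y) ∈ S} :=
    measurable_measure_prodMk_right hS
  have hgm : Measurable g := (hmT.ennreal_toReal).div hmS.ennreal_toReal
  have hg0 : ∀ y, 0 ≤ g y := fun y => div_nonneg ENNReal.toReal_nonneg ENNReal.toReal_nonneg
  have hg1 : ∀ y, g y ≤ 1 := by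
    intro y
    rcases eq_or_ne (volume {l : ℝ | (l, y) ∈ S}) ⊤ with h | h
    · simp [hg, h]
    · rcases eq_or_ne ((volume {l : ℝ | (l, y) ∈ S}).toReal) 0 with h0 | h0
      · simp [hg, h0]
      · rw [hg]
        apply div_le_one_of_le₀ _ ENNReal.toReal_nonneg
        exact ENNReal.toReal_mono h (measure_mono (fun l hl => hTS hl))
  have hprodS : (volume : Measure (ℝ × (Fin n → ℝ))) S
      = ∫⁻ y, volume {l : ℝ | (l, y) ∈ S} ∂(volume : Measure (Fin n → ℝ)) := by
    rw [hvol, Measure.prod_apply_symm hS]; rfl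
  have hprodT : (volume : Measure (ℝ × (Fin n → ℝ))) T
      = ∫⁻ y, volume {l : ℝ | (l, y) ∈ T} ∂(volume : Measure (Fin n → ℝ)) := by
    rw [hvol, Measure.prod_apply_symm hT]; rfl
  have haefin : ∀ᵐ y ∂(volume : Measure (Fin n → ℝ)), volume {l : ℝ | (l, y) ∈ S} < ⊤ := by
    apply ae_lt_top hmS
    rw [← hprodS]; exact hSfin.ne
  have hint : Integrable (S.indicator (fun p => g p.2)) (volume : Measure (ℝ × (Fin n → ℝ))) := by
    haveI : Fact ((volume : Measure (ℝ × (Fin n → ℝ))) S < ⊤) := ⟨hSfin⟩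
    refine (integrable_indicator_iff hS).mpr ⟨((hgm.comp measurable_snd).aestronglyMeasurable).restrict, ?_⟩
    refine HasFiniteIntegral.of_bounded (C := 1) (Filter.Eventually.of_forall fun p => ?_)
    rw [Real.norm_eq_abs, abs_of_nonneg (hg0 _)]
    exact hg1 _
  calc
    ∫ p in S, (volume {l : ℝ | (l, p.2) ∈ T}).toReal / (volume {l : ℝ | (l, p.2) ∈ S}).toReal
        = ∫ p, S.indicator (fun p : ℝ × (Fin n → ℝ) => g p.2) p := (integral_indicator hS).symm
    _ = ∫ y, ∫ t, S.indicator (fun p : ℝ × (Fin n → ℝ) => g p.2) (t, y) := by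
      rw [hvol] at hint ⊢
      exact integral_prod_symm _ hint
    _ = ∫ y, (volume {l : ℝ | (l, y) ∈ S}).toReal • g y := by
      congr 1
      funext y
      have : (fun t => S.indicator (fun p : ℝ × (Fin n → ℝ) => g p.2) (t, y))
          = {l : ℝ | (l, y) ∈ S}.indicator (fun _ => g y) := by
        funext t
        by_cases h : (t, y) ∈ S <;> simp [Set.indicator, h]
      rw [this, integral_indicator_const _ (hSy y), measureReal_def]
    _ = ∫ y, (volume {l : ℝ | (l, y) ∈ T}).toReal := by
      apply integral_congr_ae
      filter_upwards [haefin] with y hy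
      rcases eq_or_ne (volume {l : ℝ | (l, y) ∈ S}) 0 with h0 | h0
      · have hT0 : volume {l : ℝ | (l, y) ∈ T} = 0 :=
          measure_mono_null (fun l hl => hTS hl) h0
        simp [hg, h0, hT0]
      · have hpos : 0 < (volume {l : ℝ | (l, y) ∈ S}).toReal :=
          ENNReal.toReal_pos h0 hy.ne
        rw [hg, smul_eq_mul, mul_div_cancel₀ _ hpos.ne']
    _ = (volume T).toReal := by
      have hTfin : ∀ᵐ y ∂(volume : Measure (Fin n → ℝ)), volume {l : ℝ | (l, y) ∈ T} < ⊤ := by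
        filter_upwards [haefin] with y hy
        exact lt_of_le_of_lt (measure_mono (fun l hl => hTS hl)) hy
      rw [integral_toReal hmT.aemeasurable hTfin, ← hprodT]


/-- Invariance of Lebesgue measure for the hit-and-run step along a fixed unit direction `e`:
for a compact convex `X ⊂ ℝ^d` with nonempty interior and any Borel `A ⊆ X`,
`∫_X ℒ¹({λ : x+λe ∈ A})/ℒ¹({λ : x+λe ∈ X}) dℒ_d(x) = ℒ_d(A)`
(the quotient being `0` when the denominator vanishes). -/
theorem hit_and_run_lebesgue_invariant (d : ℕ) (hd : 1 ≤ d)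
    (X : Set (EuclideanSpace ℝ (Fin d))) (hXcompact : IsCompact X) (hXconvex : Convex ℝ X)
    (hXint : (interior X).Nonempty)
    (e : EuclideanSpace ℝ (Fin d)) (he : ‖e‖ = 1)
    (A : Set (EuclideanSpace ℝ (Fin d))) (hA : MeasurableSet A) (hAX : A ⊆ X) :
    ∫ x in X,
        (volume {l : ℝ | x + l • e ∈ A}).toReal / (volume {l : ℝ | x + l • e ∈ X}).toReal
      = (volume A).toReal := by
  obtain ⟨n, rfl⟩ : ∃ n, d = n + 1 := ⟨d - 1, (Nat.succ_pred_eq_of_pos hd).symm⟩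
  have hX : MeasurableSet X := hXcompact.isClosed.measurableSet
  -- orthonormal basis whose first vector is `e`
  have horth : Orthonormal ℝ (({0} : Set (Fin (n+1))).restrict (fun _ => e)) := by
    constructor
    · intro i; exact he
    · intro i j hij
      exact absurd (Subtype.ext (i.2.trans j.2.symm)) hij
  obtain ⟨b, hb⟩ := horth.exists_orthonormalBasis_extension_of_card_eq (by simp)
  have hbe : b 0 = e := hb 0 rfl
  let Φ : EuclideanSpace ℝ (Fin (n+1)) ≃ᵐ ℝ × (Fin n → ℝ) :=
    (b.repr.toHomeomorph.toMeasurableEquiv).trans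
      ((MeasurableEquiv.toLp 2 (Fin (n+1) → ℝ)).symm.trans
        (MeasurableEquiv.piFinSuccAbove (fun _ => ℝ) 0))
  have hΦ : MeasurePreserving Φ volume volume :=
    ((volume_preserving_piFinSuccAbove (fun _ => ℝ) 0).comp
      (EuclideanSpace.volume_preserving_symm_measurableEquiv_toLp (Fin (n+1)))).comp
        b.measurePreserving_repr
  have happ : ∀ x, Φ x = (b.repr x 0, fun j => b.repr x (Fin.succ j)) := fun x => rfl
  have hΦadd : ∀ (x : EuclideanSpace ℝ (Fin (n+1))) (l : ℝ),
      Φ (x + l • e) = ((Φ x).1 + l, (Φ x).2) := by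
    intro x l
    have hrepr : b.repr (x + l • e) = b.repr x + l • (EuclideanSpace.single 0 1) := by
      rw [map_add, LinearIsometryEquiv.map_smul, ← hbe, b.repr_self]
    rw [happ, happ, hrepr]
    refine Prod.ext ?_ ?_
    · show b.repr x 0 + l • (EuclideanSpace.single (0 : Fin (n+1)) (1:ℝ)) 0 = b.repr x 0 + l
      simp [EuclideanSpace.single_apply]
    · funext j
      show b.repr x j.succ + l • (EuclideanSpace.single (0 : Fin (n+1)) (1:ℝ)) j.succ
        = b.repr x j.succ
      simp [EuclideanSpace.single_apply, Fin.succ_ne_zero]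
  set S : Set (ℝ × (Fin n → ℝ)) := Φ.symm ⁻¹' X with hSdef
  set T : Set (ℝ × (Fin n → ℝ)) := Φ.symm ⁻¹' A with hTdef
  have hSm : MeasurableSet S := Φ.symm.measurable hX
  have hTm : MeasurableSet T := Φ.symm.measurable hA
  have hTS : T ⊆ S := fun p hp => hAX hp
  have hΦsymm : MeasurePreserving Φ.symm volume volume := hΦ.symm Φ
  have hvolS : volume S = volume X := hΦsymm.measure_preimage hX.nullMeasurableSet
  have hvolT : volume T = volume A := hΦsymm.measure_preimage hA.nullMeasurableSet
  have hSfin : volume S < ⊤ := by rw [hvolS]; exact hXcompact.measure_lt_top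
  -- pointwise identification of the integrand
  have hmemA : ∀ (x : EuclideanSpace ℝ (Fin (n+1))) (l : ℝ),
      x + l • e ∈ A ↔ ((Φ x).1 + l, (Φ x).2) ∈ T := by
    intro x l
    rw [← hΦadd, hTdef, Set.mem_preimage, Φ.symm_apply_apply]
  have hmemX : ∀ (x : EuclideanSpace ℝ (Fin (n+1))) (l : ℝ),
      x + l • e ∈ X ↔ ((Φ x).1 + l, (Φ x).2) ∈ S := by
    intro x l
    rw [← hΦadd, hSdef, Set.mem_preimage, Φ.symm_apply_apply]
  have htrans : ∀ (U : Set (ℝ × (Fin n → ℝ))) (c : ℝ) (y : Fin n → ℝ),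
      volume {l : ℝ | (c + l, y) ∈ U} = volume {l : ℝ | (l, y) ∈ U} := by
    intro U c y
    have : {l : ℝ | (c + l, y) ∈ U} = (fun l => c + l) ⁻¹' {l : ℝ | (l, y) ∈ U} := rfl
    rw [this, measure_preimage_add]
  have hinteq : ∀ x : EuclideanSpace ℝ (Fin (n+1)),
      (volume {l : ℝ | x + l • e ∈ A}).toReal / (volume {l : ℝ | x + l • e ∈ X}).toReal
      = (volume {l : ℝ | (l, (Φ x).2) ∈ T}).toReal
        / (volume {l : ℝ | (l, (Φ x).2) ∈ S}).toReal := by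
    intro x
    have h1 : {l : ℝ | x + l • e ∈ A} = {l : ℝ | ((Φ x).1 + l, (Φ x).2) ∈ T} := by
      ext l; exact hmemA x l
    have h2 : {l : ℝ | x + l • e ∈ X} = {l : ℝ | ((Φ x).1 + l, (Φ x).2) ∈ S} := by
      ext l; exact hmemX x l
    rw [h1, h2, htrans T, htrans S]
  have hXpre : Φ ⁻¹' S = X := by
    ext x; simp [hSdef]
  calc
    ∫ x in X,
        (volume {l : ℝ | x + l • e ∈ A}).toReal / (volume {l : ℝ | x + l • e ∈ X}).toReal
      = ∫ x in Φ ⁻¹' S,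
          (volume {l : ℝ | (l, (Φ x).2) ∈ T}).toReal
            / (volume {l : ℝ | (l, (Φ x).2) ∈ S}).toReal := by
        rw [hXpre]
        exact integral_congr_ae (Filter.Eventually.of_forall fun x => hinteq x)
    _ = ∫ p in S,
          (volume {l : ℝ | (l, p.2) ∈ T}).toReal / (volume {l : ℝ | (l, p.2) ∈ S}).toReal :=
        hΦ.setIntegral_preimage_emb Φ.measurableEmbedding (fun p => (volume {l : ℝ | (l, p.2) ∈ T}).toReal / (volume {l : ℝ | (l, p.2) ∈ S}).toReal) S
    _ = (volume T).toReal := prod_slice_lemma S T hSm hTm hTS hSfin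
    _ = (volume A).toReal := by rw [hvolT]
end

section
/- Let N ≥ 2 and let A be an N×N complex Hermitian matrix with Tr A = 1. If ‖A − I/N‖_HS ≤ 1/√(N(N−1)), then A is positive semidefinite, i.e., A is a density matrix. Hence the radius of the ball inscribed in the set Ω_N of density matrices (within the hyperplane of trace-one Hermitian matrices) is r = 1/√(N(N−1)). -/
open Matrix ComplexOrder

open Finset in
lemma aux_real_insphere (N : ℕ) (hN : 2 ≤ N) (μ : Fin N → ℝ)
    (hsum : ∑ i, μ i = 1)
    (hS : ∑ i, (μ i - (N : ℝ)⁻¹) ^ 2 ≤ ((N : ℝ) * ((N : ℝ) - 1))⁻¹)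
    (k : Fin N) : 0 ≤ μ k := by
  by_contra hk
  push_neg at hk
  have hNR : (2 : ℝ) ≤ (N : ℝ) := by exact_mod_cast hN
  have hN0 : (0 : ℝ) < N := by linarith
  have hN1 : (0 : ℝ) < (N : ℝ) - 1 := by linarith
  set g : Fin N → ℝ := fun i => μ i - (N : ℝ)⁻¹ with hg
  have hsumg : ∑ i, g i = 0 := by
    simp only [hg, Finset.sum_sub_distrib, hsum, Finset.sum_const, Finset.card_univ,
      Fintype.card_fin, nsmul_eq_mul]
    field_simp
    norm_num
  set s : Finset (Fin N) := Finset.univ.erase k with hs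
  have hcard : (#s : ℝ) = (N : ℝ) - 1 := by
    rw [hs, Finset.card_erase_of_mem (Finset.mem_univ k), Finset.card_univ, Fintype.card_fin]
    have h1 : 1 ≤ N := by omega
    push_cast [Nat.cast_sub h1]
    ring
  have hsums : ∑ i ∈ s, g i = (N : ℝ)⁻¹ - μ k := by
    have h2 := Finset.add_sum_erase Finset.univ g (Finset.mem_univ k)
    rw [hsumg] at h2
    have h3 : ∑ i ∈ s, g i = -g k := by rw [hs]; linarith [h2]
    rw [h3, hg]; ring
  have hcheb := sq_sum_le_card_mul_sum_sq (s := s) (f := g)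
  rw [hsums, hcard] at hcheb
  have hsplit : ∑ i, g i ^ 2 = g k ^ 2 + ∑ i ∈ s, g i ^ 2 :=
    (Finset.add_sum_erase Finset.univ (fun i => g i ^ 2) (Finset.mem_univ k)).symm
  have hSg : g k ^ 2 + ∑ i ∈ s, g i ^ 2 ≤ ((N : ℝ) * ((N : ℝ) - 1))⁻¹ := by
    rw [← hsplit]; exact hS
  have hgk : g k = μ k - (N : ℝ)⁻¹ := rfl
  have hNinv : (0 : ℝ) < (N : ℝ)⁻¹ := by positivity
  have hinv1 : (N : ℝ) * (N : ℝ)⁻¹ = 1 := mul_inv_cancel₀ (ne_of_gt hN0)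
  have hinv2 : ((N : ℝ) * ((N : ℝ) - 1)) * ((N : ℝ) * ((N : ℝ) - 1))⁻¹ = 1 :=
    mul_inv_cancel₀ (by positivity)
  nlinarith [hcheb, hSg, mul_pos hN0 hN1, sq_nonneg ((N : ℝ)⁻¹ - μ k),
    mul_pos hNinv (mul_pos hN0 hN1), sq_nonneg (μ k), mul_pos hNinv hNinv,
    mul_pos (mul_pos hNinv hNinv) hN1, mul_pos hNinv hN1]

/-- If `A` is an `N×N` Hermitian matrix of trace one whose Hilbert–Schmidt distance to the
maximally mixed state `I/N` is at most `1/√(N(N−1))`, then `A` is positive semidefinite,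
i.e. `A` is a density matrix: the inscribed radius of the set `Ω_N` of density matrices,
within the hyperplane of trace-one Hermitian matrices, is `1/√(N(N−1))`. -/
theorem density_matrix_insphere_radius (N : ℕ) (hN : 2 ≤ N)
    (A : Matrix (Fin N) (Fin N) ℂ) (hherm : A.IsHermitian) (htr : A.trace = 1)
    (hdist : Real.sqrt (((A - (N : ℂ)⁻¹ • 1)ᴴ * (A - (N : ℂ)⁻¹ • 1)).trace.re)
      ≤ 1 / Real.sqrt (N * (N - 1))) :
    A.PosSemidef := by
  classical
  have hNR : (2 : ℝ) ≤ (N : ℝ) := by exact_mod_cast hN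
  have hN0 : (0 : ℝ) < N := by linarith
  have hN1 : (0 : ℝ) < (N : ℝ) - 1 := by linarith
  set μ : Fin N → ℝ := hherm.eigenvalues with hμ
  set U : Matrix (Fin N) (Fin N) ℂ := (hherm.eigenvectorUnitary : Matrix (Fin N) (Fin N) ℂ)
    with hUdef
  have hUU : U * Uᴴ = 1 := hherm.eigenvectorUnitary.prop.2
  have hsU : Uᴴ * U = 1 := hherm.eigenvectorUnitary.prop.1
  have hspec : A = U * diagonal (RCLike.ofReal ∘ μ) * Uᴴ := hherm.spectral_theorem
  -- trace A = sum of eigenvalues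
  have htrace_eig : ∑ i, (μ i : ℂ) = 1 := by
    have h1 : A.trace = (diagonal (RCLike.ofReal ∘ μ)).trace := by
      rw [hspec, trace_mul_cycle, hsU, one_mul]
    rw [htr] at h1
    have h2 := h1.symm
    rw [trace_diagonal] at h2
    exact h2
  have hsum : ∑ i, μ i = 1 := by
    have h := htrace_eig
    rw [← Complex.ofReal_sum] at h
    exact_mod_cast h
  -- factor B
  set g : Fin N → ℝ := fun i => μ i - (N : ℝ)⁻¹ with hg
  set E : Matrix (Fin N) (Fin N) ℂ := diagonal (fun i => (g i : ℂ)) with hE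
  have key : ∀ X : Matrix (Fin N) (Fin N) ℂ, Uᴴ * (U * X) = X := fun X => by
    rw [← Matrix.mul_assoc, hsU, one_mul]
  have hB : A - (N : ℂ)⁻¹ • 1 = U * E * Uᴴ := by
    have hdg : E = diagonal (RCLike.ofReal ∘ μ) - (N : ℂ)⁻¹ • 1 := by
      rw [hE]
      ext i j
      by_cases h : i = j
      · subst h
        simp [Matrix.diagonal_apply_eq, Matrix.one_apply_eq, hg]
      · simp [Matrix.diagonal_apply_ne _ h, Matrix.one_apply_ne h]
    rw [hdg, Matrix.mul_sub, Matrix.sub_mul, ← hspec, Matrix.mul_smul, Matrix.smul_mul,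
      mul_one, hUU]
  have hEH : Eᴴ = E := by
    have hstar : (star fun i : Fin N => ((g i : ℝ) : ℂ)) = fun i : Fin N => ((g i : ℝ) : ℂ) :=
      funext fun i => Complex.conj_ofReal _
    rw [hE, diagonal_conjTranspose, hstar]
  -- compute trace of Bᴴ B
  have htrB : ((A - (N : ℂ)⁻¹ • 1)ᴴ * (A - (N : ℂ)⁻¹ • 1)).trace.re = ∑ i, g i ^ 2 := by
    rw [hB]
    have h1 : (U * E * Uᴴ)ᴴ * (U * E * Uᴴ) = U * (E * E) * Uᴴ := by
      simp only [conjTranspose_mul, conjTranspose_conjTranspose, hEH, Matrix.mul_assoc]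
      rw [key]
    rw [h1, trace_mul_cycle, hsU, one_mul, hE, diagonal_mul_diagonal, trace_diagonal]
    have h2 : ∀ i : Fin N, (g i : ℂ) * (g i : ℂ) = ((g i ^ 2 : ℝ) : ℂ) := by
      intro i; push_cast; ring
    simp_rw [h2]
    rw [← Complex.ofReal_sum, Complex.ofReal_re]
  have hS : ∑ i, g i ^ 2 ≤ ((N : ℝ) * ((N : ℝ) - 1))⁻¹ := by
    rw [htrB] at hdist
    have h2 : Real.sqrt (∑ i, g i ^ 2) ≤ Real.sqrt (((N : ℝ) * ((N : ℝ) - 1))⁻¹) := by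
      rw [Real.sqrt_inv]
      rw [one_div] at hdist
      exact hdist
    exact (Real.sqrt_le_sqrt_iff (by positivity)).mp h2
  exact hherm.posSemidef_iff_eigenvalues_nonneg.mpr (fun k => aux_real_insphere N hN μ hsum hS k)
end

section
/- Let K ≥ 2 and N = K². Let A be an N×N complex Hermitian matrix (indexed by Fin K × Fin K) with Tr A = 1. If ‖A − I/N‖_HS ≤ 1/√(N(N−1)), then both A and its partial transpose T₂A are positive semidefinite; that is, A is a PPT state. Hence the set of PPT states contains the ball of radius r = 1/√(N(N−1)) around the maximally mixed state, the same inscribed radius as the full set of quantum states Ω_N. -/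
open Matrix ComplexOrder

/-- The partial transpose `T₂ = I ⊗ T` on operators on `ℂ^K ⊗ ℂ^K`:
`(T₂ρ)_{(i,j),(k,l)} = ρ_{(i,l),(k,j)}`. -/
def partialTranspose {K : ℕ} (ρ : Matrix (Fin K × Fin K) (Fin K × Fin K) ℂ) :
    Matrix (Fin K × Fin K) (Fin K × Fin K) ℂ :=
  fun p q => ρ (p.1, q.2) (q.1, p.2)

private lemma eig_nonneg_aux {ι : Type*} [Fintype ι] [DecidableEq ι] (f : ι → ℝ) (N : ℕ)
    (hN : Fintype.card ι = N) (h2 : 2 ≤ N) (hsum : ∑ i, f i = 1)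
    (hsq : ∑ i, (f i - (N : ℝ)⁻¹) ^ 2 ≤ ((N : ℝ) * ((N : ℝ) - 1))⁻¹) (j : ι) : 0 ≤ f j := by
  by_contra hj
  push_neg at hj
  set x : ℝ := (N : ℝ) with hx
  have hx2 : (2 : ℝ) ≤ x := by simp only [hx]; exact_mod_cast h2
  have hx0 : 0 < x := by linarith
  have hx1 : 0 < x - 1 := by linarith
  set g : ι → ℝ := fun i => f i - x⁻¹ with hg
  have hgsum : ∑ i, g i = 0 := by
    simp only [hg, Finset.sum_sub_distrib, hsum, Finset.sum_const, Finset.card_univ, hN,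
      nsmul_eq_mul]
    field_simp
    simp [hx]
  have hadd := Finset.add_sum_erase Finset.univ g (Finset.mem_univ j)
  have hs : ∑ i ∈ Finset.univ.erase j, g i = - g j := by
    linarith [hadd.trans hgsum]
  have hcs := sq_sum_le_card_mul_sum_sq (s := Finset.univ.erase j) (f := g)
  rw [hs, Finset.card_erase_of_mem (Finset.mem_univ j), Finset.card_univ, hN] at hcs
  have hadd2 := Finset.add_sum_erase Finset.univ (fun i => g i ^ 2) (Finset.mem_univ j)
  have hsplit : ∑ i ∈ Finset.univ.erase j, g i ^ 2 = (∑ i, g i ^ 2) - g j ^ 2 := by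
    linarith
  rw [hsplit] at hcs
  have hcast : ((N - 1 : ℕ) : ℝ) = x - 1 := by
    have h1 : (1:ℕ) ≤ N := by omega
    push_cast [h1]
    ring
  rw [neg_sq, hcast] at hcs
  set T : ℝ := ∑ i, g i ^ 2 with hT
  have hT1 : T * (x * (x - 1)) ≤ 1 := by
    have hpos : 0 < x * (x - 1) := by positivity
    calc T * (x * (x-1)) ≤ (x * (x-1))⁻¹ * (x * (x-1)) :=
          mul_le_mul_of_nonneg_right hsq hpos.le
      _ = 1 := inv_mul_cancel₀ hpos.ne'
  have hgj : g j < -x⁻¹ := by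
    have : (0:ℝ) < x⁻¹ := by positivity
    simp only [hg]
    linarith
  have hxgj : x * g j < -1 := by
    have := mul_lt_mul_of_pos_left hgj hx0
    rwa [mul_neg, mul_inv_cancel₀ hx0.ne'] at this
  nlinarith [sq_nonneg (x * g j + 1), sq_nonneg (g j)]

private lemma key_posSemidef {n : Type*} [Fintype n] [DecidableEq n]
    (A : Matrix n n ℂ) (hA : A.IsHermitian) (N : ℕ) (hN : Fintype.card n = N) (h2 : 2 ≤ N)
    (htr : A.trace = 1)
    (hdist : ((A - (N : ℂ)⁻¹ • 1)ᴴ * (A - (N : ℂ)⁻¹ • 1)).trace.re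
      ≤ ((N : ℝ) * ((N : ℝ) - 1))⁻¹) :
    A.PosSemidef := by
  set U : Matrix n n ℂ := (hA.eigenvectorUnitary : Matrix n n ℂ) with hU
  have hUmem := hA.eigenvectorUnitary.2
  have hU1 : Uᴴ * U = 1 := by
    simpa [star_eq_conjTranspose] using (Matrix.mem_unitaryGroup_iff'.mp hUmem)
  have hU2 : U * Uᴴ = 1 := by
    simpa [star_eq_conjTranspose] using (Matrix.mem_unitaryGroup_iff.mp hUmem)
  have hspec : A = U * diagonal (RCLike.ofReal ∘ hA.eigenvalues) * Uᴴ := by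
    simpa [star_eq_conjTranspose] using hA.spectral_theorem
  set lam : n → ℝ := hA.eigenvalues with hlam
  -- trace of conjugation
  have htrconj : ∀ M : Matrix n n ℂ, (U * M * Uᴴ).trace = M.trace := by
    intro M
    rw [Matrix.trace_mul_comm, ← Matrix.mul_assoc, hU1, Matrix.one_mul]
  -- sum of eigenvalues = 1
  have htr2 : ∑ i, lam i = 1 := by
    have : A.trace = ∑ i, (lam i : ℂ) := by
      rw [hspec, htrconj, Matrix.trace_diagonal]
      rfl
    rw [htr] at this
    exact_mod_cast this.symm
  -- the shifted matrix
  set E : Matrix n n ℂ := diagonal (fun i => (lam i : ℂ) - (N : ℂ)⁻¹) with hE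
  have hB : A - (N : ℂ)⁻¹ • 1 = U * E * Uᴴ := by
    have h1 : (N : ℂ)⁻¹ • (1 : Matrix n n ℂ) = U * ((N : ℂ)⁻¹ • 1) * Uᴴ := by
      rw [Matrix.mul_smul, Matrix.mul_one, Matrix.smul_mul, hU2]
    rw [hspec]
    rw [h1]
    rw [← Matrix.sub_mul, ← Matrix.mul_sub]
    congr 1
    congr 1
    rw [hE]
    ext i j
    by_cases hij : i = j <;>
      simp [Matrix.diagonal_apply, Matrix.one_apply, hij, Function.comp]
  -- trace of BᴴB
  have hBconj : (U * E * Uᴴ)ᴴ * (U * E * Uᴴ) = U * (Eᴴ * E) * Uᴴ := by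
    rw [conjTranspose_mul, conjTranspose_mul, conjTranspose_conjTranspose]
    simp only [Matrix.mul_assoc]
    rw [← Matrix.mul_assoc Uᴴ U, hU1, Matrix.one_mul]
  have hEE : (Eᴴ * E).trace = ((∑ i, (lam i - (N : ℝ)⁻¹) ^ 2 : ℝ) : ℂ) := by
    rw [hE, Matrix.diagonal_conjTranspose, Matrix.diagonal_mul_diagonal,
      Matrix.trace_diagonal]
    push_cast
    congr 1
    ext i
    have : star ((lam i : ℂ) - (N : ℂ)⁻¹) = (lam i : ℂ) - (N : ℂ)⁻¹ := by
      simp [Complex.star_def, map_sub, Complex.conj_ofReal, map_inv₀, map_natCast]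
    rw [Pi.star_apply, this]
    ring
  have hdist2 : ∑ i, (lam i - (N : ℝ)⁻¹) ^ 2 ≤ ((N : ℝ) * ((N : ℝ) - 1))⁻¹ := by
    have : ((A - (N : ℂ)⁻¹ • 1)ᴴ * (A - (N : ℂ)⁻¹ • 1)).trace.re
        = ∑ i, (lam i - (N : ℝ)⁻¹) ^ 2 := by
      rw [hB, hBconj, htrconj, hEE, Complex.ofReal_re]
    rwa [this] at hdist
  exact hA.posSemidef_iff_eigenvalues_nonneg.mpr (eig_nonneg_aux lam N hN h2 htr2 hdist2)

private def ptEquiv (K : ℕ) :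
    ((Fin K × Fin K) × (Fin K × Fin K)) ≃ ((Fin K × Fin K) × (Fin K × Fin K)) :=
  Function.Involutive.toPerm (fun z => ((z.1.1, z.2.2), (z.2.1, z.1.2)))
    (fun z => by obtain ⟨⟨a, b⟩, ⟨c, d⟩⟩ := z; rfl)

private lemma pt_hs_trace {K : ℕ} (M : Matrix (Fin K × Fin K) (Fin K × Fin K) ℂ) :
    ((partialTranspose M)ᴴ * partialTranspose M).trace = (Mᴴ * M).trace := by
  have l1 : ((partialTranspose M)ᴴ * partialTranspose M).trace
      = ∑ z : (Fin K × Fin K) × (Fin K × Fin K),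
          star (M (z.2.1, z.1.2) (z.1.1, z.2.2)) * M (z.2.1, z.1.2) (z.1.1, z.2.2) := by
    rw [Fintype.sum_prod_type]
    simp [Matrix.trace, Matrix.mul_apply, Matrix.conjTranspose_apply, partialTranspose]
  have l2 : (Mᴴ * M).trace
      = ∑ z : (Fin K × Fin K) × (Fin K × Fin K), star (M z.2 z.1) * M z.2 z.1 := by
    rw [Fintype.sum_prod_type]
    simp [Matrix.trace, Matrix.mul_apply, Matrix.conjTranspose_apply]
  rw [l1, l2]
  exact Fintype.sum_equiv (ptEquiv K) _ _ (fun z => rfl)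

private lemma pt_herm {K : ℕ} {A : Matrix (Fin K × Fin K) (Fin K × Fin K) ℂ}
    (h : A.IsHermitian) : (partialTranspose A).IsHermitian := by
  ext p q
  rw [Matrix.conjTranspose_apply]
  show star (A (q.1, p.2) (p.1, q.2)) = A (p.1, q.2) (q.1, p.2)
  rw [← Matrix.conjTranspose_apply, h]

private lemma pt_trace {K : ℕ} (A : Matrix (Fin K × Fin K) (Fin K × Fin K) ℂ) :
    (partialTranspose A).trace = A.trace := by
  simp [Matrix.trace, Matrix.diag, partialTranspose]

private lemma pt_sub_smul_one {K : ℕ} (A : Matrix (Fin K × Fin K) (Fin K × Fin K) ℂ) (c : ℂ) :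
    partialTranspose A - c • 1 = partialTranspose (A - c • 1) := by
  ext ⟨p1, p2⟩ ⟨q1, q2⟩
  simp only [partialTranspose, Matrix.sub_apply, Matrix.smul_apply, Matrix.one_apply,
    Prod.mk.injEq, smul_eq_mul]
  congr 1
  by_cases h1 : p1 = q1 <;> by_cases h2 : p2 = q2 <;>
    simp [h1, h2, eq_comm]
/-- If `A` is a Hermitian trace-one matrix on `ℂ^K ⊗ ℂ^K` (so `N = K²`) with
`‖A − I/N‖_HS ≤ 1/√(N(N−1))`, then both `A` and its partial transpose are positive
semidefinite, i.e. `A` is a PPT state: the set of PPT states contains the ball of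
radius `1/√(N(N−1))` around the maximally mixed state. -/
theorem ppt_states_insphere_radius (K : ℕ) (hK : 2 ≤ K) (N : ℕ) (hN : N = K ^ 2)
    (A : Matrix (Fin K × Fin K) (Fin K × Fin K) ℂ) (hherm : A.IsHermitian)
    (htr : A.trace = 1)
    (hdist : Real.sqrt (((A - (N : ℂ)⁻¹ • 1)ᴴ * (A - (N : ℂ)⁻¹ • 1)).trace.re)
      ≤ 1 / Real.sqrt (N * (N - 1))) :
    A.PosSemidef ∧ (partialTranspose A).PosSemidef := by
  have hcard : Fintype.card (Fin K × Fin K) = N := by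
    simp [hN, pow_two]
  have h2 : 2 ≤ N := by
    calc 2 ≤ 2 ^ 2 := by norm_num
      _ ≤ K ^ 2 := Nat.pow_le_pow_left hK 2
      _ = N := hN.symm
  have h2R : (2 : ℝ) ≤ (N : ℝ) := by exact_mod_cast h2
  have hpos : (0 : ℝ) ≤ (N : ℝ) * ((N : ℝ) - 1) := by nlinarith
  have hdist' : ((A - (N : ℂ)⁻¹ • 1)ᴴ * (A - (N : ℂ)⁻¹ • 1)).trace.re
      ≤ ((N : ℝ) * ((N : ℝ) - 1))⁻¹ := by
    rw [one_div, ← Real.sqrt_inv] at hdist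
    exact (Real.sqrt_le_sqrt_iff (inv_nonneg.mpr hpos)).mp hdist
  refine ⟨key_posSemidef A hherm N hcard h2 htr hdist', ?_⟩
  refine key_posSemidef (partialTranspose A) (pt_herm hherm) N hcard h2 ?_ ?_
  · rw [pt_trace, htr]
  · rw [pt_sub_smul_one, pt_hs_trace]
    exact hdist'
end
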